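/- arXiv:1608.03257 — 2 statements merged into one kernel-verified Lean document; each statement's English description precedes it below -/
import Mathlib

section
/- Let p ∈ (0,1], δ > 0, η > 0, and let D be a real random variable (the drift of a randomly selected parameter) such that with probability p, E[D | selected unstable] ≥ δ·τ, where τ > 0. Suppose the accepted change equals D·exp(−η·max{−D,0}) in expectation. Then E[D·exp(−η·max{−D,0})] ≥ p·δ·τ − (1−p)·(e·η)^{−1}. In particular, if τ > 2(1−p)/(e·η·p·δ), the expectation is at least p·δ·τ/2 > 0. -/
open MeasureTheory Real

lemma metropolis_aux_texp (t : ℝ) : t * Real.exp (-t) ≤ (Real.exp 1)⁻¹ := by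
  have h1 : t ≤ Real.exp (t - 1) := by linarith [Real.add_one_le_exp (t - 1)]
  calc t * Real.exp (-t) ≤ Real.exp (t - 1) * Real.exp (-t) :=
        mul_le_mul_of_nonneg_right h1 (Real.exp_pos _).le
    _ = (Real.exp 1)⁻¹ := by
        rw [← Real.exp_add, ← Real.exp_neg]; ring_nf

lemma metropolis_pointwise_lb {η : ℝ} (hη : 0 < η) (x : ℝ) :
    -(Real.exp 1 * η)⁻¹ ≤ x * Real.exp (-η * max (-x) 0) := by
  rcases le_or_gt 0 x with hx | hx
  · have h0 : max (-x) 0 = 0 := max_eq_right (by linarith)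
    rw [h0]
    simp only [mul_zero, Real.exp_zero, mul_one]
    have : 0 < (Real.exp 1 * η)⁻¹ := by positivity
    linarith
  · have hmax : max (-x) 0 = -x := max_eq_left (by linarith)
    rw [hmax]
    have harg : -η * -x = -(-(η * x)) := by ring
    rw [harg]
    have haux := metropolis_aux_texp (-(η * x))
    have h2 : Real.exp 1 * (Real.exp 1)⁻¹ = 1 :=
      mul_inv_cancel₀ (Real.exp_pos 1).ne'
    have hep := Real.exp_pos 1
    have hb : Real.exp 1 * (-(η * x) * Real.exp (- -(η * x))) ≤ 1 := by
      calc Real.exp 1 * (-(η * x) * Real.exp (- -(η * x)))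
          ≤ Real.exp 1 * (Real.exp 1)⁻¹ :=
            mul_le_mul_of_nonneg_left haux hep.le
        _ = 1 := h2
    have hpos : (0:ℝ) < Real.exp 1 * η := by positivity
    have hrw : -(Real.exp 1 * η)⁻¹ = (-1) / (Real.exp 1 * η) := by
      field_simp
    rw [hrw, div_le_iff₀ hpos]
    have heq : x * Real.exp (- -(η * x)) * (Real.exp 1 * η)
        = -(Real.exp 1 * (-(η * x) * Real.exp (- -(η * x)))) := by ring
    linarith [heq.ge, heq.le]

lemma metropolis_pointwise_ge_self {η : ℝ} (hη : 0 < η) (x : ℝ) :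
    x ≤ x * Real.exp (-η * max (-x) 0) := by
  rcases le_or_gt 0 x with hx | hx
  · have h0 : max (-x) 0 = 0 := max_eq_right (by linarith)
    rw [h0]; simp
  · have hmax : max (-x) 0 = -x := max_eq_left (by linarith)
    rw [hmax]
    have h1 : Real.exp (-η * -x) ≤ 1 := by
      rw [Real.exp_le_one_iff]; nlinarith
    nlinarith [Real.exp_pos (-η * -x)]

/-- Abstraction of Lemma (SubMg): if with probability `p` an unstable parameter
is selected, on which event the drift `D` has mean at least `δτ`, then the
Metropolis-accepted increment `D·exp(−η[−D]₊)` has expectation at least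
`pδτ − (1−p)/(eη)`; in particular it is at least `pδτ/2 > 0` for `τ` large. -/
theorem metropolis_drift_lower_bound
    {Ω : Type*} {m0 : MeasurableSpace Ω} {μ : Measure Ω} [IsProbabilityMeasure μ]
    {D : Ω → ℝ} {A : Set Ω} {p δ η τ : ℝ}
    (hδ : 0 < δ) (hη : 0 < η) (hτ : 0 < τ)
    (hp0 : 0 < p) (hp1 : p ≤ 1)
    (hA : MeasurableSet A) (hpA : (μ A).toReal = p)
    (hDint : Integrable D μ)
    (hGint : Integrable (fun ω => D ω * Real.exp (-η * max (-D ω) 0)) μ)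
    (hmeanA : p * δ * τ ≤ ∫ ω in A, D ω ∂μ) :
    p * δ * τ - (1 - p) * (Real.exp 1 * η)⁻¹
        ≤ (∫ ω, D ω * Real.exp (-η * max (-D ω) 0) ∂μ) ∧
      (τ > 2 * (1 - p) / (Real.exp 1 * η * p * δ) →
        p * δ * τ / 2 ≤ ∫ ω, D ω * Real.exp (-η * max (-D ω) 0) ∂μ) := by
  set G : Ω → ℝ := fun ω => D ω * Real.exp (-η * max (-D ω) 0) with hG
  have hsplit : (∫ ω in A, G ω ∂μ) + (∫ ω in Aᶜ, G ω ∂μ) = ∫ ω, G ω ∂μ :=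
    integral_add_compl hA hGint
  have hcompl : (μ Aᶜ).toReal = 1 - p := by
    rw [prob_compl_eq_one_sub hA,
      ENNReal.toReal_sub_of_le prob_le_one ENNReal.one_ne_top,
      ENNReal.toReal_one, hpA]
  have hA1 : p * δ * τ ≤ ∫ ω in A, G ω ∂μ := by
    refine le_trans hmeanA (setIntegral_mono_on hDint.integrableOn
      hGint.integrableOn hA ?_)
    intro x _
    exact metropolis_pointwise_ge_self hη (D x)
  have hA2 : -(1 - p) * (Real.exp 1 * η)⁻¹ ≤ ∫ ω in Aᶜ, G ω ∂μ := by
    have hc : (∫ _ in Aᶜ, -(Real.exp 1 * η)⁻¹ ∂μ)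
        = -(1 - p) * (Real.exp 1 * η)⁻¹ := by
      rw [setIntegral_const, show μ.real Aᶜ = (μ Aᶜ).toReal from rfl, hcompl, smul_eq_mul]; ring
    rw [← hc]
    refine setIntegral_mono_on (integrableOn_const ?_)
      hGint.integrableOn hA.compl ?_
    · exact (measure_lt_top μ Aᶜ).ne
    · intro x _
      exact metropolis_pointwise_lb hη (D x)
  have hmain : p * δ * τ - (1 - p) * (Real.exp 1 * η)⁻¹ ≤ ∫ ω, G ω ∂μ := by
    rw [← hsplit]; linarith
  refine ⟨hmain, fun hτ2 => ?_⟩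
  have hden : 0 < Real.exp 1 * η * p * δ := by positivity
  rw [gt_iff_lt, div_lt_iff₀ hden] at hτ2
  have hinv : (Real.exp 1 * η) * (Real.exp 1 * η)⁻¹ = 1 :=
    mul_inv_cancel₀ (by positivity)
  have hinvpos : 0 < (Real.exp 1 * η)⁻¹ := by positivity
  have h1p : 0 ≤ 1 - p := by linarith
  -- (1-p) * (eη)⁻¹ ≤ p δ τ / 2
  have hr : τ * (Real.exp 1 * η * p * δ) * (Real.exp 1 * η)⁻¹ = τ * p * δ := by
    field_simp
  have : (1 - p) * (Real.exp 1 * η)⁻¹ ≤ p * δ * τ / 2 := by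
    have := mul_le_mul_of_nonneg_right hτ2.le hinvpos.le
    rw [hr] at this
    linarith
  linarith
end

section
/- Let (S_n)_{n≥0} be a process on [0,∞) with increments bounded by c > 0 such that whenever S_n > κ the conditional drift is at most −δ < 0 (i.e. E[S_{n+1} − S_n | F_n, S_n > κ] ≤ −δ, interpreted via a stopped supermartingale). Fix a level L > κ + c. Then the probability that within N steps the process, started from a value in (κ, κ + c], reaches a value ≥ L before returning to [0, κ], is at most exp(−(L − κ − c)²/(2c²N)), and by a union bound over at most N possible excursions, the probability that the running maximum over N steps of any excursion above κ exceeds L is at most N·exp(−(L − κ − c)²/(2c²N)). -/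
open MeasureTheory Filter

open ProbabilityTheory Real


/-- Chord bound for the exponential on `[-c, c]`. -/
lemma exp_le_cosh_add_sinh {l c x : ℝ} (hc : 0 < c) (hx : |x| ≤ c) :
    Real.exp (l * x) ≤ Real.cosh (l * c) + Real.sinh (l * c) * (x / c) := by
  obtain ⟨hx1, hx2⟩ := abs_le.mp hx
  have ha : 0 ≤ (c - x) / (2 * c) := div_nonneg (by linarith) (by linarith)
  have hb : 0 ≤ (c + x) / (2 * c) := div_nonneg (by linarith) (by linarith)
  have hab : (c - x) / (2 * c) + (c + x) / (2 * c) = 1 := by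
    field_simp
    ring
  have h := convexOn_exp.2 (Set.mem_univ (l * -c)) (Set.mem_univ (l * c)) ha hb hab
  simp only [smul_eq_mul] at h
  have e1 : (c - x) / (2 * c) * (l * -c) + (c + x) / (2 * c) * (l * c) = l * x := by
    field_simp
    ring
  rw [e1] at h
  refine h.trans_eq ?_
  rw [Real.cosh_eq, Real.sinh_eq]
  have : l * -c = -(l * c) := by ring
  rw [this]
  field_simp
  ring

/-- Azuma-Hoeffding type bound for a sum of a.e.-bounded, conditionally
nonpositive-mean adapted differences. -/
lemma azuma_sum_bound {Ω : Type*} {m0 : MeasurableSpace Ω} {μ : Measure Ω}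
    [IsProbabilityMeasure μ] {𝒢 : Filtration ℕ m0} {ξ : ℕ → Ω → ℝ} {c : ℝ} (hc : 0 < c)
    (hmeas : ∀ k, StronglyMeasurable[𝒢 (k + 1)] (ξ k))
    (hbd : ∀ k, ∀ᵐ ω ∂μ, |ξ k ω| ≤ c)
    (hce : ∀ k, ∀ᵐ ω ∂μ, (μ[ξ k | 𝒢 k]) ω ≤ 0)
    {N : ℕ} (hN : 1 ≤ N) {t : ℝ} (ht : 0 ≤ t) :
    μ {ω | t ≤ ∑ k ∈ Finset.range N, ξ k ω}
      ≤ ENNReal.ofReal (Real.exp (-t ^ 2 / (2 * c ^ 2 * N))) := by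
  classical
  have hNR : (0:ℝ) < N := by exact_mod_cast hN
  have hc2N : (0:ℝ) < c ^ 2 * N := by positivity
  set l : ℝ := t / (c ^ 2 * N) with hl_def
  have hl : 0 ≤ l := div_nonneg ht hc2N.le
  set W : ℕ → Ω → ℝ := fun n ω => ∑ k ∈ Finset.range n, ξ k ω with hW_def
  have hWm : ∀ n, StronglyMeasurable[𝒢 n] (W n) := by
    intro n
    apply Finset.stronglyMeasurable_fun_sum
    intro k hk
    exact (hmeas k).mono (𝒢.mono (Finset.mem_range.mp hk))
  have hbd' : ∀ᵐ ω ∂μ, ∀ k, |ξ k ω| ≤ c := (ae_all_iff).2 hbd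
  have hWbd : ∀ n, ∀ᵐ ω ∂μ, |W n ω| ≤ n * c := by
    intro n
    filter_upwards [hbd'] with ω h
    calc |W n ω| ≤ ∑ k ∈ Finset.range n, |ξ k ω| := Finset.abs_sum_le_sum_abs _ _
      _ ≤ ∑ _k ∈ Finset.range n, c := Finset.sum_le_sum fun k _ => h k
      _ = n * c := by simp [Finset.sum_const, nsmul_eq_mul]
  set F : ℕ → Ω → ℝ := fun n ω => Real.exp (l * W n ω) with hF_def
  have hFm : ∀ n, StronglyMeasurable[𝒢 n] (F n) := fun n =>
    Real.continuous_exp.comp_stronglyMeasurable ((hWm n).const_mul l)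
  have hFbd : ∀ n, ∀ᵐ ω ∂μ, ‖F n ω‖ ≤ Real.exp (l * (n * c)) := by
    intro n
    filter_upwards [hWbd n] with ω h
    rw [Real.norm_eq_abs, abs_of_pos (Real.exp_pos _), Real.exp_le_exp]
    exact mul_le_mul_of_nonneg_left ((abs_le.mp h).2) hl
  have hFint : ∀ n, Integrable (F n) μ := fun n =>
    Integrable.mono' (integrable_const _) ((hFm n).mono (𝒢.le n)).aestronglyMeasurable (hFbd n)
  have hξint : ∀ k, Integrable (ξ k) μ := by
    intro k
    refine Integrable.mono' (integrable_const c)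
      ((hmeas k).mono (𝒢.le (k + 1))).aestronglyMeasurable ?_
    filter_upwards [hbd k] with ω h
    simpa [Real.norm_eq_abs] using h
  have hstep : ∀ n, ∫ ω, F (n + 1) ω ∂μ ≤ Real.exp (l ^ 2 * c ^ 2 / 2) * ∫ ω, F n ω ∂μ := by
    intro n
    have hFnm0 : AEStronglyMeasurable (F n) μ := ((hFm n).mono (𝒢.le n)).aestronglyMeasurable
    have hFξ : Integrable (fun ω => F n ω * ξ n ω) μ :=
      (hξint n).bdd_mul hFnm0 (hFbd n)
    set G : Ω → ℝ := fun ω =>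
      F n ω * (Real.cosh (l * c) + Real.sinh (l * c) * (ξ n ω / c)) with hG_def
    have hGint : Integrable G μ := by
      have : G = fun ω => Real.cosh (l * c) * F n ω
          + (Real.sinh (l * c) / c) * (F n ω * ξ n ω) := by
        funext ω; simp only [hG_def]; ring
      rw [this]
      exact ((hFint n).const_mul _).add (hFξ.const_mul _)
    have hle1 : ∫ ω, F (n + 1) ω ∂μ ≤ ∫ ω, G ω ∂μ := by
      refine integral_mono_ae (hFint (n + 1)) hGint ?_
      filter_upwards [hbd n] with ω h
      have hsplit : F (n + 1) ω = F n ω * Real.exp (l * ξ n ω) := by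
        simp only [hF_def, hW_def, Finset.sum_range_succ, mul_add, Real.exp_add]
      rw [hsplit]
      exact mul_le_mul_of_nonneg_left (exp_le_cosh_add_sinh hc h) (Real.exp_pos _).le
    have hGeq : ∫ ω, G ω ∂μ = Real.cosh (l * c) * ∫ ω, F n ω ∂μ
        + (Real.sinh (l * c) / c) * ∫ ω, F n ω * ξ n ω ∂μ := by
      have : G = fun ω => Real.cosh (l * c) * F n ω
          + (Real.sinh (l * c) / c) * (F n ω * ξ n ω) := by
        funext ω; simp only [hG_def]; ring
      rw [this, integral_add ((hFint n).const_mul _) (hFξ.const_mul _),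
        integral_const_mul, integral_const_mul]
    have hFξle : ∫ ω, F n ω * ξ n ω ∂μ ≤ 0 := by
      have hpull :=
        condExp_stronglyMeasurable_mul_of_bound (𝒢.le n) (hFm n) (hξint n) _ (hFbd n)
      calc ∫ ω, F n ω * ξ n ω ∂μ
          = ∫ ω, (μ[F n * ξ n | 𝒢 n]) ω ∂μ := (integral_condExp (𝒢.le n)).symm
        _ = ∫ ω, (F n * μ[ξ n | 𝒢 n]) ω ∂μ := integral_congr_ae hpull
        _ ≤ 0 := by
            refine integral_nonpos_of_ae ?_
            filter_upwards [hce n] with ω h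
            have := mul_le_mul_of_nonneg_left h (Real.exp_pos (l * W n ω)).le
            simpa [hF_def] using this
    have hsinh : 0 ≤ Real.sinh (l * c) / c :=
      div_nonneg (Real.sinh_nonneg_iff.mpr (by positivity)) hc.le
    have hFpos : 0 ≤ ∫ ω, F n ω ∂μ := integral_nonneg fun ω => (Real.exp_pos _).le
    have hcosh : Real.cosh (l * c) ≤ Real.exp (l ^ 2 * c ^ 2 / 2) := by
      have := Real.cosh_le_exp_half_sq (l * c)
      rwa [mul_pow] at this
    calc ∫ ω, F (n + 1) ω ∂μ ≤ ∫ ω, G ω ∂μ := hle1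
      _ = Real.cosh (l * c) * ∫ ω, F n ω ∂μ
          + (Real.sinh (l * c) / c) * ∫ ω, F n ω * ξ n ω ∂μ := hGeq
      _ ≤ Real.cosh (l * c) * ∫ ω, F n ω ∂μ := by nlinarith
      _ ≤ Real.exp (l ^ 2 * c ^ 2 / 2) * ∫ ω, F n ω ∂μ :=
          mul_le_mul_of_nonneg_right hcosh hFpos
  have hmgf : ∀ n, ∫ ω, F n ω ∂μ ≤ Real.exp (l ^ 2 * c ^ 2 / 2) ^ n := by
    intro n
    induction n with
    | zero => simp [hF_def, hW_def]
    | succ n ih =>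
        calc ∫ ω, F (n + 1) ω ∂μ ≤ Real.exp (l ^ 2 * c ^ 2 / 2) * ∫ ω, F n ω ∂μ := hstep n
          _ ≤ Real.exp (l ^ 2 * c ^ 2 / 2) * Real.exp (l ^ 2 * c ^ 2 / 2) ^ n :=
              mul_le_mul_of_nonneg_left ih (Real.exp_pos _).le
          _ = Real.exp (l ^ 2 * c ^ 2 / 2) ^ (n + 1) := by ring
  have hch := measure_ge_le_exp_mul_mgf (X := W N) (μ := μ) (t := l) t hl (hFint N)
  have hmgf' : mgf (W N) μ l ≤ Real.exp (l ^ 2 * c ^ 2 / 2) ^ N := hmgf N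
  have hfinal : (μ {ω | t ≤ W N ω}).toReal ≤ Real.exp (-t ^ 2 / (2 * c ^ 2 * N)) := by
    have h1 : Real.exp (-l * t) * mgf (W N) μ l
        ≤ Real.exp (-l * t) * Real.exp (l ^ 2 * c ^ 2 / 2) ^ N :=
      mul_le_mul_of_nonneg_left hmgf' (Real.exp_pos _).le
    have h2 : Real.exp (-l * t) * Real.exp (l ^ 2 * c ^ 2 / 2) ^ N
        = Real.exp (-t ^ 2 / (2 * c ^ 2 * N)) := by
      rw [← Real.exp_nat_mul, ← Real.exp_add]
      congr 1
      rw [hl_def]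
      field_simp
      ring
    calc (μ {ω | t ≤ W N ω}).toReal ≤ Real.exp (-l * t) * mgf (W N) μ l := hch
      _ ≤ _ := h2 ▸ h1
  have := ENNReal.ofReal_le_ofReal hfinal
  rwa [ENNReal.ofReal_toReal (measure_ne_top μ _)] at this

/-- Excursion argument of the second half of Lemma 1 (hoefd): a nonnegative
process with increments bounded by `c` and drift at most `−δ` above level `κ`,
started just above `κ`, reaches level `L` within `N` steps before returning to
`[0, κ]` with probability at most `exp(−(L−κ−c)²/(2c²N))`; by a union bound
over at most `N` excursions, it exceeds `L` at all within `N` steps with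
probability at most `N·exp(−(L−κ−c)²/(2c²N))`. -/
theorem excursion_tail_bound
    {Ω : Type*} {m0 : MeasurableSpace Ω} {μ : Measure Ω} [IsProbabilityMeasure μ]
    {𝒢 : Filtration ℕ m0} {S : ℕ → Ω → ℝ} {c δ κ L : ℝ} {N : ℕ}
    (hc : 0 < c) (hδ : 0 < δ) (hκ : 0 < κ) (hL : κ + c < L) (hN : 1 ≤ N)
    (hadp : Adapted 𝒢 S)
    (hint : ∀ n, Integrable (S n) μ)
    (hnonneg : ∀ n, ∀ᵐ ω ∂μ, 0 ≤ S n ω)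
    (hinc : ∀ n, ∀ᵐ ω ∂μ, |S (n + 1) ω - S n ω| ≤ c)
    (hdrift : ∀ n, ∀ᵐ ω ∂μ, κ < S n ω →
      (μ[fun ω' => S (n + 1) ω' - S n ω' | 𝒢 n]) ω ≤ -δ)
    (h0 : ∀ᵐ ω ∂μ, S 0 ω ∈ Set.Ioc κ (κ + c)) :
    μ {ω | ∃ n ≤ N, L ≤ S n ω ∧ ∀ m ≤ n, κ < S m ω}
        ≤ ENNReal.ofReal (Real.exp (-(L - κ - c) ^ 2 / (2 * c ^ 2 * N))) ∧
      μ {ω | ∃ n ≤ N, L ≤ S n ω}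
        ≤ N * ENNReal.ofReal (Real.exp (-(L - κ - c) ^ 2 / (2 * c ^ 2 * N))) := by
  classical
  -- the excursion sets and stopped differences
  set D : ℕ → ℕ → Set Ω := fun s k =>
    {ω | s ≤ k ∧ (s = 0 ∨ S (s - 1) ω ≤ κ) ∧
      ∀ j, s ≤ j → j ≤ k → κ < S j ω ∧ S j ω < L} with hD_def
  set ξ : ℕ → ℕ → Ω → ℝ := fun s k =>
    (D s k).indicator (fun ω => S (k + 1) ω - S k ω) with hξ_def
  have hSm : ∀ {i k : ℕ}, i ≤ k → StronglyMeasurable[𝒢 k] (S i) := fun {i k} h =>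
    ((hadp i).mono (𝒢.mono h) le_rfl).stronglyMeasurable
  -- measurability of D s k
  have hDmeas : ∀ s k, MeasurableSet[𝒢 k] (D s k) := by
    intro s k
    by_cases hsk : s ≤ k
    · have h1 : MeasurableSet[𝒢 k] {ω : Ω | s = 0 ∨ S (s - 1) ω ≤ κ} := by
        rcases Nat.eq_zero_or_pos s with hs | hs
        · simp [hs]
        · have : {ω : Ω | s = 0 ∨ S (s - 1) ω ≤ κ} = {ω : Ω | S (s - 1) ω ≤ κ} := by
            ext ω; simp [(show s ≠ 0 by omega)]
          rw [this]
          exact (hSm (le_trans (Nat.sub_le s 1) hsk)).measurable measurableSet_Iic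
      have h2 : MeasurableSet[𝒢 k]
          {ω : Ω | ∀ j, s ≤ j → j ≤ k → κ < S j ω ∧ S j ω < L} := by
        have : {ω : Ω | ∀ j, s ≤ j → j ≤ k → κ < S j ω ∧ S j ω < L}
            = ⋂ j, {ω : Ω | s ≤ j → j ≤ k → κ < S j ω ∧ S j ω < L} := by
          ext ω; simp
        rw [this]
        refine MeasurableSet.iInter fun j => ?_
        by_cases hj : s ≤ j ∧ j ≤ k
        · have : {ω : Ω | s ≤ j → j ≤ k → κ < S j ω ∧ S j ω < L}
              = S j ⁻¹' Set.Ioo κ L := by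
            ext ω; simp [hj.1, hj.2, Set.mem_Ioo]
          rw [this]
          exact (hSm hj.2).measurable measurableSet_Ioo
        · have : {ω : Ω | s ≤ j → j ≤ k → κ < S j ω ∧ S j ω < L} = Set.univ := by
            ext ω
            simp only [Set.mem_setOf_eq, Set.mem_univ, iff_true]
            intro h1 h2; exact absurd ⟨h1, h2⟩ hj
          rw [this]; exact MeasurableSet.univ
      have : D s k = {ω : Ω | s = 0 ∨ S (s - 1) ω ≤ κ}
          ∩ {ω : Ω | ∀ j, s ≤ j → j ≤ k → κ < S j ω ∧ S j ω < L} := by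
        ext ω; simp [hD_def, hsk, and_assoc]
      rw [this]; exact h1.inter h2
    · have : D s k = ∅ := by
        ext ω; simp [hD_def, hsk]
      rw [this]; exact @MeasurableSet.empty _ (𝒢 k)
  -- properties needed for the Azuma lemma
  have hmeas : ∀ s k, StronglyMeasurable[𝒢 (k + 1)] (ξ s k) := by
    intro s k
    have h1 : StronglyMeasurable[𝒢 (k + 1)] (fun ω => S (k + 1) ω - S k ω) :=
      (hadp (k + 1)).stronglyMeasurable.sub (hSm k.le_succ)
    have h2 : MeasurableSet[𝒢 (k + 1)] (D s k) := 𝒢.mono k.le_succ _ (hDmeas s k)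
    exact h1.indicator h2
  have hbd : ∀ s k, ∀ᵐ ω ∂μ, |ξ s k ω| ≤ c := by
    intro s k
    filter_upwards [hinc k] with ω h
    by_cases hmem : ω ∈ D s k
    · simpa [hξ_def, Set.indicator_of_mem hmem] using h
    · simp [hξ_def, Set.indicator_of_notMem hmem, hc.le]
  have hce : ∀ s k, ∀ᵐ ω ∂μ, (μ[ξ s k | 𝒢 k]) ω ≤ 0 := by
    intro s k
    have hΔint : Integrable (fun ω => S (k + 1) ω - S k ω) μ := (hint (k + 1)).sub (hint k)
    have hind : StronglyMeasurable[𝒢 k] ((D s k).indicator (fun _ : Ω => (1 : ℝ))) :=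
      stronglyMeasurable_const.indicator (hDmeas s k)
    have hindbd : ∀ᵐ ω ∂μ, ‖(D s k).indicator (fun _ : Ω => (1 : ℝ)) ω‖ ≤ 1 := by
      refine Eventually.of_forall fun ω => ?_
      by_cases hmem : ω ∈ D s k <;>
        simp [Set.indicator_of_mem, Set.indicator_of_notMem, hmem]
    have hrw : ξ s k = (D s k).indicator (fun _ : Ω => (1 : ℝ))
        * fun ω => S (k + 1) ω - S k ω := by
      funext ω
      by_cases hmem : ω ∈ D s k <;>
        simp [hξ_def, Set.indicator_of_mem, Set.indicator_of_notMem, hmem]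
    have hpull := condExp_stronglyMeasurable_mul_of_bound (𝒢.le k) hind hΔint 1 hindbd
    rw [hrw]
    filter_upwards [hpull, hdrift k] with ω hω hdω
    rw [hω]
    by_cases hmem : ω ∈ D s k
    · have hκS : κ < S k ω := (hmem.2.2 k hmem.1 le_rfl).1
      have h1 : (μ[fun ω' => S (k + 1) ω' - S k ω' | 𝒢 k]) ω ≤ -δ := hdω hκS
      simp only [Pi.mul_apply, Set.indicator_of_mem hmem, one_mul]
      exact h1.trans (by linarith)
    · simp [Set.indicator_of_notMem hmem]
  set t : ℝ := L - κ - c with ht_def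
  have ht : 0 ≤ t := by rw [ht_def]; linarith
  -- the Azuma bound for each starting index s
  have hA : ∀ s, μ {ω | t ≤ ∑ k ∈ Finset.range N, ξ s k ω}
      ≤ ENNReal.ofReal (Real.exp (-t ^ 2 / (2 * c ^ 2 * N))) := fun s =>
    azuma_sum_bound hc (hmeas s) (hbd s) (hce s) hN ht
  have hbound_eq : Real.exp (-t ^ 2 / (2 * c ^ 2 * N))
      = Real.exp (-(L - κ - c) ^ 2 / (2 * c ^ 2 * N)) := by rw [ht_def]
  -- telescoping helper
  have htel : ∀ (ω : Ω) (s n : ℕ), s ≤ n → n ≤ N →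
      (∀ k, ξ s k ω = if s ≤ k ∧ k < n then S (k + 1) ω - S k ω else 0) →
      ∑ k ∈ Finset.range N, ξ s k ω = S n ω - S s ω := by
    intro ω s n hsn hnN hkey
    have h1 : ∑ k ∈ Finset.range N, ξ s k ω
        = ∑ k ∈ Finset.Ico s n, (S (k + 1) ω - S k ω) := by
      rw [show ∑ k ∈ Finset.range N, ξ s k ω
          = ∑ k ∈ Finset.range N, (if s ≤ k ∧ k < n then S (k + 1) ω - S k ω else 0) from
        Finset.sum_congr rfl fun k _ => hkey k]
      have hsub' : Finset.Ico s n ⊆ Finset.range N := by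
        intro k hk
        rw [Finset.mem_Ico] at hk
        rw [Finset.mem_range]
        omega
      rw [← Finset.sum_subset hsub' (fun k _ hk => by
        rw [Finset.mem_Ico] at hk; exact if_neg hk)]
      exact Finset.sum_congr rfl fun k hk => by
        rw [Finset.mem_Ico] at hk; rw [if_pos hk]
    rw [h1, Finset.sum_Ico_eq_sub _ hsn, Finset.sum_range_sub (fun k => S k ω),
      Finset.sum_range_sub (fun k => S k ω)]
    ring
  -- Part 1: excursion from time 0
  have hpart1 : μ {ω | ∃ n ≤ N, L ≤ S n ω ∧ ∀ m ≤ n, κ < S m ω}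
      ≤ ENNReal.ofReal (Real.exp (-(L - κ - c) ^ 2 / (2 * c ^ 2 * N))) := by
    rw [← hbound_eq]
    refine le_trans (measure_mono_ae ?_) (hA 0)
    filter_upwards [h0] with ω h0ω
    intro hev
    obtain ⟨n₀, hn₀N, hn₀⟩ := hev
    have hP : ∃ n, n ≤ N ∧ L ≤ S n ω ∧ ∀ m ≤ n, κ < S m ω := ⟨n₀, hn₀N, hn₀⟩
    set n := Nat.find hP with hn_def
    obtain ⟨hnN, hnL, hnκ⟩ := Nat.find_spec hP
    have hmin : ∀ m < n, ¬(m ≤ N ∧ L ≤ S m ω ∧ ∀ j ≤ m, κ < S j ω) :=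
      fun m hm => Nat.find_min hP hm
    have hkey : ∀ k, ξ 0 k ω = if 0 ≤ k ∧ k < n then S (k + 1) ω - S k ω else 0 := by
      intro k
      by_cases hk : k < n
      · rw [if_pos ⟨Nat.zero_le k, hk⟩]
        have hmem : ω ∈ D 0 k := by
          refine ⟨Nat.zero_le k, Or.inl rfl, fun j _ hjk => ⟨hnκ j (by omega), ?_⟩⟩
          by_contra hLj
          push_neg at hLj
          exact hmin j (by omega) ⟨by omega, hLj, fun m hm => hnκ m (by omega)⟩
        simp [hξ_def, Set.indicator_of_mem hmem]
      · rw [if_neg (by omega)]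
        have hmem : ω ∉ D 0 k := by
          rintro ⟨-, -, hall⟩
          exact absurd hnL (not_le.mpr (hall n (Nat.zero_le n) (by omega)).2)
        simp [hξ_def, Set.indicator_of_notMem hmem]
    show t ≤ ∑ k ∈ Finset.range N, ξ 0 k ω
    rw [htel ω 0 n (Nat.zero_le n) hnN (by simpa using hkey)]
    have := h0ω.2
    rw [ht_def]
    linarith
  refine ⟨hpart1, ?_⟩
  -- Part 2: union bound over starting indices
  have hsub : {ω | ∃ n ≤ N, L ≤ S n ω} ≤ᵐ[μ]
      ⋃ s ∈ Finset.range N, {ω | t ≤ ∑ k ∈ Finset.range N, ξ s k ω} := by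
    filter_upwards [h0, (ae_all_iff).2 hinc] with ω h0ω hincω
    intro hev
    obtain ⟨n₀, hn₀N, hn₀⟩ := hev
    have hP : ∃ n, n ≤ N ∧ L ≤ S n ω := ⟨n₀, hn₀N, hn₀⟩
    set n := Nat.find hP with hn_def
    obtain ⟨hnN, hnL⟩ := Nat.find_spec hP
    have hmin : ∀ m < n, ¬(m ≤ N ∧ L ≤ S m ω) := fun m hm => Nat.find_min hP hm
    have hn1 : 1 ≤ n := by
      by_contra h
      push_neg at h
      have hn0 : n = 0 := by omega
      have hL0 : L ≤ S 0 ω := by rw [← hn0]; exact hnL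
      linarith [h0ω.2]
    set m := Nat.findGreatest (fun j => S j ω ≤ κ) (n - 1) with hm_def
    have hmem_union : ∀ s, s < N → t ≤ ∑ k ∈ Finset.range N, ξ s k ω →
        ω ∈ ⋃ s ∈ Finset.range N, {ω | t ≤ ∑ k ∈ Finset.range N, ξ s k ω} := by
      intro s hs hts
      exact Set.mem_biUnion (Finset.mem_range.mpr hs) hts
    by_cases hQ : S m ω ≤ κ
    · -- an excursion starting after the last return time m
      have hmn : m ≤ n - 1 := Nat.findGreatest_le _
      have hnoret : ∀ j, m < j → j ≤ n - 1 → κ < S j ω := by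
        intro j h1 h2
        exact not_le.mp (Nat.findGreatest_is_greatest h1 h2)
      have hSm1 : S (m + 1) ω ≤ κ + c := by
        have := hincω m
        have := abs_le.mp this
        linarith [this.2]
      have hsn : m + 1 < n := by
        rcases Nat.lt_or_ge (m + 1) n with h | h
        · exact h
        · exfalso
          have hmn1 : m + 1 = n := by omega
          rw [hmn1] at hSm1
          linarith
      have hkey : ∀ k, ξ (m + 1) k ω
          = if m + 1 ≤ k ∧ k < n then S (k + 1) ω - S k ω else 0 := by
        intro k
        by_cases hk : m + 1 ≤ k ∧ k < n
        · rw [if_pos hk]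
          have hmem : ω ∈ D (m + 1) k := by
            refine ⟨hk.1, Or.inr (by simpa using hQ), fun j h1 h2 => ⟨?_, ?_⟩⟩
            · exact hnoret j (by omega) (by omega)
            · by_contra hLj
              push_neg at hLj
              exact hmin j (by omega) ⟨by omega, hLj⟩
          simp [hξ_def, Set.indicator_of_mem hmem]
        · rw [if_neg hk]
          have hmem : ω ∉ D (m + 1) k := by
            rintro ⟨h1, -, hall⟩
            rcases Nat.lt_or_ge k n with h | h
            · exact hk ⟨h1, h⟩
            · exact absurd hnL (not_le.mpr (hall n (by omega) (by omega)).2)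
          simp [hξ_def, Set.indicator_of_notMem hmem]
      refine hmem_union (m + 1) (by omega) ?_
      rw [htel ω (m + 1) n (by omega) hnN hkey]
      rw [ht_def]
      linarith
    · -- no return: excursion from time 0
      have hnoret : ∀ j, j ≤ n - 1 → κ < S j ω := by
        intro j hj
        by_contra hle
        push_neg at hle
        have := Nat.findGreatest_spec (P := fun j => S j ω ≤ κ) hj hle
        exact hQ this
      have hkey : ∀ k, ξ 0 k ω = if 0 ≤ k ∧ k < n then S (k + 1) ω - S k ω else 0 := by
        intro k
        by_cases hk : k < n
        · rw [if_pos ⟨Nat.zero_le k, hk⟩]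
          have hmem : ω ∈ D 0 k := by
            refine ⟨Nat.zero_le k, Or.inl rfl, fun j _ hjk => ⟨hnoret j (by omega), ?_⟩⟩
            by_contra hLj
            push_neg at hLj
            exact hmin j (by omega) ⟨by omega, hLj⟩
          simp [hξ_def, Set.indicator_of_mem hmem]
        · rw [if_neg (by omega)]
          have hmem : ω ∉ D 0 k := by
            rintro ⟨-, -, hall⟩
            exact absurd hnL (not_le.mpr (hall n (Nat.zero_le n) (by omega)).2)
          simp [hξ_def, Set.indicator_of_notMem hmem]
      refine hmem_union 0 (by omega) ?_
      rw [htel ω 0 n (Nat.zero_le n) hnN (by simpa using hkey)]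
      have := h0ω.2
      rw [ht_def]
      linarith
  calc μ {ω | ∃ n ≤ N, L ≤ S n ω}
      ≤ μ (⋃ s ∈ Finset.range N, {ω | t ≤ ∑ k ∈ Finset.range N, ξ s k ω}) :=
        measure_mono_ae hsub
    _ ≤ ∑ s ∈ Finset.range N, μ {ω | t ≤ ∑ k ∈ Finset.range N, ξ s k ω} :=
        measure_biUnion_finset_le _ _
    _ ≤ ∑ _s ∈ Finset.range N,
          ENNReal.ofReal (Real.exp (-(L - κ - c) ^ 2 / (2 * c ^ 2 * N))) :=
        Finset.sum_le_sum fun s _ => (hA s).trans_eq (by rw [hbound_eq])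
    _ = N * ENNReal.ofReal (Real.exp (-(L - κ - c) ^ 2 / (2 * c ^ 2 * N))) := by
        rw [Finset.sum_const, Finset.card_range, nsmul_eq_mul]
end
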